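/- Let α ∈ (0,1), X a real Banach space, u₀ ∈ X, and let f : [0,∞) × X → X be continuous and locally Lipschitz. Then there exists τ > 0 and a continuous function u : [0,τ] → X with u(t) = u₀ + (1/Γ(α)) ∫_0^t (t−s)^{α−1} f(s, u(s)) ds for all t ∈ [0,τ]; moreover this solution is unique: any continuous v : [0,τ] → X satisfying the same integral equation on [0,τ] coincides with u. -/

import Mathlib

open Set MeasureTheory Filter

open Set MeasureTheory Filter intervalIntegral

namespace FracAux

variable {X : Type*} [NormedAddCommGroup X] [NormedSpace ℝ X]

noncomputable def J (α : ℝ) (g : ℝ → X) (t : ℝ) : X :=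
  ∫ σ in (0:ℝ)..1, (σ ^ (α - 1)) • g (t - t * σ)

lemma meas_aux {α : ℝ} {g : ℝ → X} (hg : Continuous g) (t : ℝ) :
    AEStronglyMeasurable (fun σ : ℝ => (σ ^ (α - 1)) • g (t - t * σ))
      (volume.restrict (uIoc (0:ℝ) 1)) :=
  (((by fun_prop : Measurable fun σ : ℝ => σ ^ (α - 1))).aestronglyMeasurable).smul
    ((hg.comp (by continuity)).aestronglyMeasurable)

lemma kernel_integrable {α : ℝ} (hα : 0 < α) :
    IntervalIntegrable (fun σ : ℝ => σ ^ (α - 1)) volume 0 1 :=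
  intervalIntegrable_rpow' (by linarith)

lemma kernel_integral {α : ℝ} (hα : 0 < α) :
    (∫ σ in (0:ℝ)..1, σ ^ (α - 1)) = 1 / α := by
  rw [integral_rpow (Or.inl (by linarith))]
  rw [sub_add_cancel, Real.one_rpow, Real.zero_rpow hα.ne']
  ring

lemma J_integrand_integrable {α : ℝ} (hα : 0 < α) {g : ℝ → X} (hg : Continuous g) (t : ℝ) :
    IntervalIntegrable (fun σ : ℝ => (σ ^ (α - 1)) • g (t - t * σ)) volume 0 1 := by
  obtain ⟨C, hC⟩ := (isCompact_Icc (a := -|t|) (b := |t|)).exists_bound_of_continuousOn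
    hg.continuousOn
  apply ((kernel_integrable hα).const_mul (max C 0)).mono_fun (meas_aux hg t)
  filter_upwards [ae_restrict_mem measurableSet_uIoc] with σ hσ
  rw [uIoc_of_le (by norm_num : (0:ℝ) ≤ 1)] at hσ
  have hσ0 : 0 < σ := hσ.1
  have hσ1 : σ ≤ 1 := hσ.2
  have harg : t - t * σ ∈ Icc (-|t|) |t| := by
    constructor <;> nlinarith [abs_nonneg t, le_abs_self t, neg_abs_le t]
  have h1 : ‖g (t - t * σ)‖ ≤ max C 0 := le_max_of_le_left (hC _ harg)
  rw [norm_smul, Real.norm_eq_abs, Real.norm_eq_abs,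
    abs_of_nonneg (Real.rpow_nonneg hσ0.le _)]
  rw [abs_of_nonneg (by positivity : (0:ℝ) ≤ max C 0 * σ ^ (α - 1))]
  rw [mul_comm (max C 0)]
  exact mul_le_mul_of_nonneg_left h1 (Real.rpow_nonneg hσ0.le _)

lemma J_continuous {α : ℝ} (hα : 0 < α) {g : ℝ → X} (hg : Continuous g) :
    Continuous (J α g) := by
  rw [continuous_iff_continuousAt]
  intro t₀
  obtain ⟨C, hC⟩ := (isCompact_Icc (a := -(|t₀|+1)) (b := |t₀|+1)).exists_bound_of_continuousOn
    hg.continuousOn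
  apply intervalIntegral.continuousAt_of_dominated_interval
    (bound := fun σ => max C 0 * σ ^ (α - 1))
  · filter_upwards with t using meas_aux hg t
  · filter_upwards [Metric.ball_mem_nhds t₀ one_pos] with t ht
    filter_upwards with σ hσ
    rw [uIoc_of_le (by norm_num : (0:ℝ) ≤ 1)] at hσ
    have hσ0 : 0 < σ := hσ.1
    have hσ1 : σ ≤ 1 := hσ.2
    have htt : |t| ≤ |t₀| + 1 := by
      have := abs_sub_abs_le_abs_sub t t₀
      rw [Metric.mem_ball, Real.dist_eq] at ht
      linarith
    have harg : t - t * σ ∈ Icc (-(|t₀|+1)) (|t₀|+1) := by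
      have h1 : |t - t * σ| ≤ |t| := by
        rw [show t - t * σ = t * (1 - σ) by ring, abs_mul]
        nlinarith [abs_nonneg t, abs_of_nonneg (by linarith : (0:ℝ) ≤ 1 - σ)]
      constructor
      · linarith [neg_abs_le (t - t * σ)]
      · linarith [le_abs_self (t - t * σ)]
    have h1 : ‖g (t - t * σ)‖ ≤ max C 0 := le_max_of_le_left (hC _ harg)
    rw [norm_smul, Real.norm_eq_abs,
      abs_of_nonneg (Real.rpow_nonneg hσ0.le _), mul_comm (max C 0)]
    exact mul_le_mul_of_nonneg_left h1 (Real.rpow_nonneg hσ0.le _)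
  · exact (kernel_integrable hα).const_mul _
  · filter_upwards with σ _
    exact (continuous_const.smul (hg.comp
      (continuous_id.sub (continuous_id.mul continuous_const)))).continuousAt

lemma V_eq {α : ℝ} (hα : 0 < α) (g : ℝ → X) {t : ℝ} (ht : 0 ≤ t) :
    (∫ s in (0:ℝ)..t, ((t - s) ^ (α - 1)) • g s) = t ^ α • J α g t := by
  rcases ht.eq_or_lt with h0 | h0
  · rw [← h0]
    simp [Real.zero_rpow hα.ne']
  set F : ℝ → X := fun x => (x ^ (α - 1)) • g (t - x) with hF
  have h1 : (∫ s in (0:ℝ)..t, ((t - s) ^ (α - 1)) • g s) = ∫ s in (0:ℝ)..t, F (t - s) :=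
    integral_congr fun s _ => by simp [hF, sub_sub_cancel]
  have h2 : (∫ s in (0:ℝ)..t, F (t - s)) = ∫ x in (0:ℝ)..t, F x := by
    rw [intervalIntegral.integral_comp_sub_left F t, sub_self, sub_zero]
  have h3 : (t • ∫ σ in (0:ℝ)..1, F (t * σ)) = ∫ x in (0:ℝ)..t, F x := by
    set_option linter.unnecessarySimpa false in
    simpa using intervalIntegral.smul_integral_comp_mul_left (a := 0) (b := 1) F t
  have h4 : (∫ σ in (0:ℝ)..1, F (t * σ)) = t ^ (α - 1) • J α g t := by
    rw [J, ← intervalIntegral.integral_smul]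
    apply integral_congr
    intro σ hσ
    rw [uIcc_of_le (by norm_num : (0:ℝ) ≤ 1)] at hσ
    simp only [hF]
    rw [Real.mul_rpow ht hσ.1, mul_smul]
  rw [h1, h2, ← h3, h4, smul_smul]
  congr 1
  rw [show α = 1 + (α - 1) by ring, Real.rpow_add h0, Real.rpow_one]
  ring_nf

lemma J_norm_le {α : ℝ} (hα : 0 < α) {g : ℝ → X} {t M : ℝ}
    (ht : 0 ≤ t) (hM : ∀ s ∈ Icc 0 t, ‖g s‖ ≤ M) : ‖J α g t‖ ≤ M / α := by
  have hM0 : 0 ≤ M := le_trans (norm_nonneg _) (hM 0 ⟨le_refl _, ht⟩)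
  have key : ‖J α g t‖ ≤ |∫ σ in (0:ℝ)..1, M * σ ^ (α - 1)| := by
    apply intervalIntegral.norm_integral_le_abs_of_norm_le
    · filter_upwards [ae_restrict_mem measurableSet_uIoc] with σ hσ
      rw [uIoc_of_le (by norm_num : (0:ℝ) ≤ 1)] at hσ
      have hσ0 : 0 < σ := hσ.1
      have hσ1 : σ ≤ 1 := hσ.2
      have harg : t - t * σ ∈ Icc 0 t := by
        constructor <;> nlinarith
      have h1 : ‖g (t - t * σ)‖ ≤ M := hM _ harg
      rw [norm_smul, Real.norm_eq_abs, abs_of_nonneg (Real.rpow_nonneg hσ0.le _),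
        mul_comm M]
      exact mul_le_mul_of_nonneg_left h1 (Real.rpow_nonneg hσ0.le _)
    · exact (kernel_integrable hα).const_mul M
  rw [intervalIntegral.integral_const_mul, kernel_integral hα] at key
  calc ‖J α g t‖ ≤ |M * (1/α)| := key
    _ = M / α := by rw [abs_of_nonneg (by positivity)]; ring

lemma J_sub {α : ℝ} (hα : 0 < α) {g₁ g₂ : ℝ → X} (hg₁ : Continuous g₁)
    (hg₂ : Continuous g₂) (t : ℝ) :
    J α g₁ t - J α g₂ t = J α (fun s => g₁ s - g₂ s) t := by
  rw [J, J, J, ← intervalIntegral.integral_sub (J_integrand_integrable hα hg₁ t)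
    (J_integrand_integrable hα hg₂ t)]
  congr 1
  ext σ
  rw [smul_sub]

lemma cont_rpow {α : ℝ} (hα : 0 < α) : Continuous fun t : ℝ => t ^ α :=
  continuous_iff_continuousAt.2 fun t => Real.continuousAt_rpow_const t α (Or.inr hα.le)

end FracAux

open FracAux in
/-- Local existence and uniqueness for the fractional Cauchy problem in Volterra form:
if `f` is continuous and locally Lipschitz then there is `τ > 0` and a unique continuous
solution of the integral equation on `[0,τ]`. -/
theorem fractional_local_existence_uniqueness
    (α : ℝ) (hα : α ∈ Set.Ioo (0 : ℝ) 1)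
    (X : Type*) [NormedAddCommGroup X] [NormedSpace ℝ X] [CompleteSpace X]
    (u₀ : X) (f : ℝ → X → X)
    (hf_cont : ContinuousOn (fun p : ℝ × X => f p.1 p.2) (Set.Ici 0 ×ˢ Set.univ))
    (hf_lip : ∀ t₀ ∈ Set.Ici (0 : ℝ), ∀ x₀ : X, ∃ L > (0 : ℝ), ∃ r > (0 : ℝ),
      ∀ (s : ℝ) (x y : X), s ∈ Set.Ici (0 : ℝ) →
        dist (s, x) (t₀, x₀) < r → dist (s, y) (t₀, x₀) < r →
        ‖f s x - f s y‖ ≤ L * ‖x - y‖) :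
    ∃ τ > (0 : ℝ), ∃ u : ℝ → X,
      ContinuousOn u (Set.Icc 0 τ) ∧
      (∀ s ∈ Set.Icc (0 : ℝ) τ,
        u s = u₀ + (1 / Real.Gamma α) •
          ∫ r in (0 : ℝ)..s, ((s - r) ^ (α - 1)) • f r (u r)) ∧
      (∀ v : ℝ → X, ContinuousOn v (Set.Icc 0 τ) →
        (∀ s ∈ Set.Icc (0 : ℝ) τ,
          v s = u₀ + (1 / Real.Gamma α) •
            ∫ r in (0 : ℝ)..s, ((s - r) ^ (α - 1)) • f r (v r)) →
        ∀ s ∈ Set.Icc (0 : ℝ) τ, v s = u s) := by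
  obtain ⟨hα0, hα1⟩ := hα
  obtain ⟨L, hL, r, hr, hlip⟩ := hf_lip 0 (Set.mem_Ici.mpr le_rfl) u₀
  set R : ℝ := r / 2 with hRdef
  have hR0 : 0 < R := by positivity
  have hRr : R < r := by rw [hRdef]; linarith
  -- bound on f · u₀
  have hcont0 : ContinuousOn (fun s : ℝ => f s u₀) (Icc 0 R) := by
    apply hf_cont.comp ((continuous_id.prodMk continuous_const).continuousOn)
    intro s hs
    exact ⟨hs.1, mem_univ _⟩
  obtain ⟨M₀, hM₀⟩ := isCompact_Icc.exists_bound_of_continuousOn hcont0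
  set M : ℝ := max M₀ 0 + L * R with hMdef
  have hM0 : 0 < M := by
    have h1 : (0:ℝ) ≤ max M₀ 0 := le_max_right _ _
    nlinarith
  set c : ℝ := 1 / Real.Gamma α with hcdef
  have hc0 : 0 < c := by
    have := Real.Gamma_pos_of_pos hα0
    positivity
  -- choice of τ
  set b₁ : ℝ := (R/2) * α / (c * M) with hb₁
  set b₂ : ℝ := α / (2 * c * L) with hb₂
  have hb₁0 : 0 < b₁ := by positivity
  have hb₂0 : 0 < b₂ := by positivity
  set τ : ℝ := min R (min (b₁ ^ α⁻¹) (b₂ ^ α⁻¹)) with hτdef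
  have hτ0 : 0 < τ :=
    lt_min hR0 (lt_min (Real.rpow_pos_of_pos hb₁0 _) (Real.rpow_pos_of_pos hb₂0 _))
  have hτle : (0:ℝ) ≤ τ := hτ0.le
  have hτR : τ ≤ R := min_le_left _ _
  have hτα1 : τ ^ α ≤ b₁ := by
    calc τ ^ α ≤ (b₁ ^ α⁻¹) ^ α :=
          Real.rpow_le_rpow hτle ((min_le_right _ _).trans (min_le_left _ _)) hα0.le
      _ = b₁ := Real.rpow_inv_rpow hb₁0.le hα0.ne'
  have hτα2 : τ ^ α ≤ b₂ := by
    calc τ ^ α ≤ (b₂ ^ α⁻¹) ^ α :=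
          Real.rpow_le_rpow hτle ((min_le_right _ _).trans (min_le_right _ _)) hα0.le
      _ = b₂ := Real.rpow_inv_rpow hb₂0.le hα0.ne'
  have hτα0 : 0 ≤ τ ^ α := Real.rpow_nonneg hτle _
  have hnum1 : c * (τ ^ α * (M / α)) ≤ R / 2 := by
    have h := mul_le_mul_of_nonneg_left hτα1 (by positivity : (0:ℝ) ≤ c * M / α)
    have he : c * M / α * b₁ = R / 2 := by
      rw [hb₁]; field_simp
    calc c * (τ ^ α * (M / α)) = c * M / α * τ ^ α := by ring
      _ ≤ c * M / α * b₁ := h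
      _ = R / 2 := he
  have hnum2 : c * (τ ^ α * (L / α)) ≤ 1 / 2 := by
    have h := mul_le_mul_of_nonneg_left hτα2 (by positivity : (0:ℝ) ≤ c * L / α)
    have he : c * L / α * b₂ = 1 / 2 := by
      rw [hb₂]; field_simp
    calc c * (τ ^ α * (L / α)) = c * L / α * τ ^ α := by ring
      _ ≤ c * L / α * b₂ := h
      _ = 1 / 2 := he
  -- extension and composed vector field
  set ext : C(Icc (0:ℝ) τ, X) → ℝ → X := fun w => IccExtend hτle w with hextdef
  have hext_cont : ∀ w : C(Icc (0:ℝ) τ, X), Continuous (ext w) := fun w =>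
    w.continuous.Icc_extend'
  have hext_mem : ∀ (w : C(Icc (0:ℝ) τ, X)) (s : ℝ), ∃ p : Icc (0:ℝ) τ, ext w s = w p :=
    fun w s => ⟨_, rfl⟩
  set G : C(Icc (0:ℝ) τ, X) → ℝ → X := fun w s => f (max s 0) (ext w s) with hGdef
  have hG_cont : ∀ w, Continuous (G w) := by
    intro w
    have h := hf_cont.comp_continuous
      ((continuous_id.max continuous_const).prodMk (hext_cont w))
      (fun s => ⟨Set.mem_Ici.mpr (le_max_right _ _), mem_univ _⟩)
    exact h
  -- pointwise bound and Lipschitz property for G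
  have hGbound : ∀ (w : C(Icc (0:ℝ) τ, X)) (s : ℝ), s ∈ Icc (0:ℝ) τ →
      ‖ext w s - u₀‖ ≤ R → ‖G w s‖ ≤ M := by
    intro w s hs hw
    have hsmax : max s 0 = s := max_eq_left hs.1
    have hsR : s ∈ Icc (0:ℝ) R := ⟨hs.1, hs.2.trans hτR⟩
    have hdist : dist ((max s 0, ext w s) : ℝ × X) ((0:ℝ), u₀) < r := by
      rw [Prod.dist_eq]
      apply max_lt
      · rw [Real.dist_eq, hsmax, sub_zero, abs_of_nonneg hs.1]
        exact lt_of_le_of_lt hsR.2 hRr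
      · rw [dist_eq_norm]
        exact lt_of_le_of_lt hw hRr
    have hdist0 : dist ((max s 0, u₀) : ℝ × X) ((0:ℝ), u₀) < r := by
      rw [Prod.dist_eq]
      apply max_lt
      · rw [Real.dist_eq, hsmax, sub_zero, abs_of_nonneg hs.1]
        exact lt_of_le_of_lt hsR.2 hRr
      · simpa using hr
    have hl := hlip (max s 0) (ext w s) u₀ (Set.mem_Ici.mpr (le_max_right _ _)) hdist hdist0
    have hM₀' : ‖f (max s 0) u₀‖ ≤ max M₀ 0 :=
      le_max_of_le_left (hM₀ _ (by rw [hsmax]; exact hsR))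
    calc ‖G w s‖ = ‖(f (max s 0) (ext w s) - f (max s 0) u₀) + f (max s 0) u₀‖ := by
          rw [sub_add_cancel]
      _ ≤ ‖f (max s 0) (ext w s) - f (max s 0) u₀‖ + ‖f (max s 0) u₀‖ := norm_add_le _ _
      _ ≤ L * ‖ext w s - u₀‖ + max M₀ 0 := add_le_add hl hM₀'
      _ ≤ L * R + max M₀ 0 := by nlinarith
      _ = M := by rw [hMdef]; ring
  have hGlip : ∀ (w₁ w₂ : C(Icc (0:ℝ) τ, X)) (s : ℝ), s ∈ Icc (0:ℝ) τ →
      ‖ext w₁ s - u₀‖ ≤ R → ‖ext w₂ s - u₀‖ ≤ R →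
      ‖G w₁ s - G w₂ s‖ ≤ L * ‖ext w₁ s - ext w₂ s‖ := by
    intro w₁ w₂ s hs h₁ h₂
    have hsmax : max s 0 = s := max_eq_left hs.1
    have hd : ∀ x : X, ‖x - u₀‖ ≤ R →
        dist ((max s 0, x) : ℝ × X) ((0:ℝ), u₀) < r := by
      intro x hx
      rw [Prod.dist_eq]
      apply max_lt
      · rw [Real.dist_eq, hsmax, sub_zero, abs_of_nonneg hs.1]
        exact lt_of_le_of_lt (hs.2.trans hτR) hRr
      · rw [dist_eq_norm]; exact lt_of_le_of_lt hx hRr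
    exact hlip (max s 0) (ext w₁ s) (ext w₂ s) (Set.mem_Ici.mpr (le_max_right _ _)) (hd _ h₁) (hd _ h₂)
  -- the invariant set
  set S : Set C(Icc (0:ℝ) τ, X) := {w | ∀ p, ‖w p - u₀‖ ≤ R} with hSdef
  have hSclosed : IsClosed S := by
    have hSeq : S = ⋂ p : Icc (0:ℝ) τ,
        (fun w : C(Icc (0:ℝ) τ, X) => w p) ⁻¹' Metric.closedBall u₀ R := by
      ext w
      simp [hSdef, Metric.mem_closedBall, dist_eq_norm]
    rw [hSeq]
    exact isClosed_iInter fun p =>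
      Metric.isClosed_closedBall.preimage (continuous_eval_const p)
  have hextS : ∀ w ∈ S, ∀ s : ℝ, ‖ext w s - u₀‖ ≤ R := by
    intro w hw s
    obtain ⟨p, hp⟩ := hext_mem w s
    rw [hp]; exact hw p
  -- the operator
  set Tfun : C(Icc (0:ℝ) τ, X) → C(Icc (0:ℝ) τ, X) := fun w =>
    ⟨fun p => u₀ + c • (((p:ℝ) ^ α) • J α (G w) p),
      continuous_const.add (continuous_const.smul
        (((cont_rpow hα0).comp continuous_subtype_val).smul
          ((J_continuous hα0 (hG_cont w)).comp continuous_subtype_val)))⟩ with hTfundef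
  have hTval : ∀ (w : C(Icc (0:ℝ) τ, X)) (p : Icc (0:ℝ) τ),
      Tfun w p = u₀ + c • ∫ s in (0:ℝ)..(p:ℝ), (((p:ℝ) - s) ^ (α - 1)) • G w s := by
    intro w p
    rw [V_eq hα0 (G w) p.2.1]
    rfl
  have hTmem : ∀ w ∈ S, Tfun w ∈ S := by
    intro w hw p
    have hJ : ‖J α (G w) (p:ℝ)‖ ≤ M / α :=
      J_norm_le hα0 p.2.1 (fun s hs => hGbound w s ⟨hs.1, hs.2.trans p.2.2⟩ (hextS w hw s))
    have heq : ‖Tfun w p - u₀‖ = c * ((p:ℝ) ^ α * ‖J α (G w) (p:ℝ)‖) := by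
      show ‖u₀ + c • (((p:ℝ) ^ α) • J α (G w) (p:ℝ)) - u₀‖ = _
      rw [add_sub_cancel_left, norm_smul, norm_smul, Real.norm_eq_abs, Real.norm_eq_abs,
        abs_of_nonneg hc0.le, abs_of_nonneg (Real.rpow_nonneg p.2.1 _)]
    rw [heq]
    calc c * ((p:ℝ) ^ α * ‖J α (G w) (p:ℝ)‖) ≤ c * (τ ^ α * (M / α)) := by
          apply mul_le_mul_of_nonneg_left _ hc0.le
          exact mul_le_mul (Real.rpow_le_rpow p.2.1 p.2.2 hα0.le) hJ (norm_nonneg _) hτα0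
      _ ≤ R / 2 := hnum1
      _ ≤ R := by linarith
  have hTcontract : ∀ w₁ ∈ S, ∀ w₂ ∈ S,
      dist (Tfun w₁) (Tfun w₂) ≤ (1/2) * dist w₁ w₂ := by
    intro w₁ h₁ w₂ h₂
    rw [ContinuousMap.dist_le (by positivity)]
    intro p
    have hdG : ∀ s ∈ Icc (0:ℝ) (p:ℝ), ‖(fun s' => G w₁ s' - G w₂ s') s‖ ≤ L * dist w₁ w₂ := by
      intro s hs
      have hsI : s ∈ Icc (0:ℝ) τ := ⟨hs.1, hs.2.trans p.2.2⟩
      refine (hGlip w₁ w₂ s hsI (hextS _ h₁ s) (hextS _ h₂ s)).trans ?_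
      apply mul_le_mul_of_nonneg_left _ hL.le
      have hq1 : ext w₁ s = w₁ (Set.projIcc 0 τ hτle s) := rfl
      have hq2 : ext w₂ s = w₂ (Set.projIcc 0 τ hτle s) := rfl
      rw [hq1, hq2, ← dist_eq_norm]
      exact ContinuousMap.dist_apply_le_dist _
    have hJd : ‖J α (fun s' => G w₁ s' - G w₂ s') (p:ℝ)‖ ≤ L * dist w₁ w₂ / α :=
      J_norm_le hα0 p.2.1 hdG
    have heq : Tfun w₁ p - Tfun w₂ p
        = c • (((p:ℝ) ^ α) • (J α (G w₁) (p:ℝ) - J α (G w₂) (p:ℝ))) := by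
      show (u₀ + c • _) - (u₀ + c • _) = _
      rw [smul_sub, smul_sub]
      abel
    rw [dist_eq_norm, heq, J_sub hα0 (hG_cont w₁) (hG_cont w₂)]
    rw [norm_smul, norm_smul, Real.norm_eq_abs, Real.norm_eq_abs, abs_of_nonneg hc0.le,
      abs_of_nonneg (Real.rpow_nonneg p.2.1 _)]
    calc c * ((p:ℝ) ^ α * ‖J α (fun s' => G w₁ s' - G w₂ s') (p:ℝ)‖)
        ≤ c * (τ ^ α * (L * dist w₁ w₂ / α)) := by
          apply mul_le_mul_of_nonneg_left _ hc0.le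
          exact mul_le_mul (Real.rpow_le_rpow p.2.1 p.2.2 hα0.le) hJd (norm_nonneg _) hτα0
      _ = (c * (τ ^ α * (L / α))) * dist w₁ w₂ := by ring
      _ ≤ (1/2) * dist w₁ w₂ := mul_le_mul_of_nonneg_right hnum2 dist_nonneg
  -- fixed point
  haveI : Nonempty S := ⟨⟨ContinuousMap.const _ u₀, fun p => by simp [hR0.le]⟩⟩
  haveI : CompleteSpace S := hSclosed.completeSpace_coe
  set T : S → S := fun w => ⟨Tfun w, hTmem w w.2⟩ with hTdef
  have hT : ContractingWith (1/2 : NNReal) T := by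
    constructor
    · rw [← NNReal.coe_lt_coe]
      norm_num
    · apply LipschitzWith.of_dist_le_mul
      intro w₁ w₂
      have h := hTcontract w₁ w₁.2 w₂ w₂.2
      rw [Subtype.dist_eq, Subtype.dist_eq]
      show dist (Tfun w₁) (Tfun w₂) ≤ _
      refine h.trans ?_
      apply mul_le_mul_of_nonneg_right _ dist_nonneg
      norm_num
  set φ : S := ContractingWith.fixedPoint T hT with hφdef
  have hφfix : T φ = φ := hT.fixedPoint_isFixedPt
  have hφval : Tfun (φ : C(Icc (0:ℝ) τ, X)) = (φ : C(Icc (0:ℝ) τ, X)) :=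
    congrArg Subtype.val hφfix
  refine ⟨τ, hτ0, ext (φ : C(Icc (0:ℝ) τ, X)), (hext_cont _).continuousOn, ?_, ?_⟩
  · -- φ solves the integral equation
    intro s hs
    have h1 : ext (φ : C(Icc (0:ℝ) τ, X)) s = (φ : C(Icc (0:ℝ) τ, X)) ⟨s, hs⟩ :=
      IccExtend_of_mem hτle _ hs
    have h2 : (φ : C(Icc (0:ℝ) τ, X)) ⟨s, hs⟩ = Tfun (φ : C(Icc (0:ℝ) τ, X)) ⟨s, hs⟩ := by
      rw [hφval]
    rw [h1, h2, hTval _ ⟨s, hs⟩]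
    congr 1
    congr 1
    apply intervalIntegral.integral_congr
    intro x hx
    rw [uIcc_of_le hs.1] at hx
    have hmax : max x 0 = x := max_eq_left hx.1
    show ((s - x) ^ (α-1)) • f (max x 0) (ext (φ : C(Icc (0:ℝ) τ, X)) x) = _
    rw [hmax]
  · -- uniqueness
    intro v hv hveq s hs
    have hv0 : v 0 = u₀ := by
      have h := hveq 0 ⟨le_rfl, hτle⟩
      simpa using h
    set A : Set ℝ := {t | t ∈ Icc 0 τ ∧ ∀ s' ∈ Icc (0:ℝ) t, ‖v s' - u₀‖ ≤ R} with hAdef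
    have hA0 : (0:ℝ) ∈ A := by
      refine ⟨⟨le_rfl, hτle⟩, fun s' hs' => ?_⟩
      have hz : s' = 0 := le_antisymm hs'.2 hs'.1
      simp [hz, hv0, hR0.le]
    have hAne : A.Nonempty := ⟨0, hA0⟩
    have hAbdd : BddAbove A := ⟨τ, fun x hx => hx.1.2⟩
    set t₁ : ℝ := sSup A with ht₁def
    have ht₁0 : 0 ≤ t₁ := le_csSup hAbdd hA0
    have ht₁τ : t₁ ≤ τ := csSup_le hAne fun x hx => hx.1.2
    have hIcoB : ∀ s' ∈ Ico (0:ℝ) t₁, ‖v s' - u₀‖ ≤ R := by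
      intro s' hs'
      obtain ⟨t', ht'A, hlt⟩ := exists_lt_of_lt_csSup hAne hs'.2
      exact ht'A.2 s' ⟨hs'.1, hlt.le⟩
    have ht₁A : t₁ ∈ A := by
      refine ⟨⟨ht₁0, ht₁τ⟩, fun s' hs' => ?_⟩
      rcases lt_or_eq_of_le hs'.2 with hl | he
      · exact hIcoB s' ⟨hs'.1, hl⟩
      · rcases eq_or_lt_of_le ht₁0 with h0 | h0
        · rw [he, ← h0]
          simp [hv0, hR0.le]
        · -- use closedness
          have hBclosed : IsClosed (Icc (0:ℝ) τ ∩ (fun x => v x - u₀) ⁻¹' Metric.closedBall 0 R) := by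
            apply ContinuousOn.preimage_isClosed_of_isClosed
              ((hv.sub continuousOn_const)) isClosed_Icc Metric.isClosed_closedBall
          have hsub : Ico (0:ℝ) t₁ ⊆ Icc (0:ℝ) τ ∩ (fun x => v x - u₀) ⁻¹' Metric.closedBall 0 R := by
            intro x hx
            refine ⟨⟨hx.1, hx.2.le.trans ht₁τ⟩, ?_⟩
            simp only [mem_preimage, Metric.mem_closedBall, dist_zero_right]
            exact hIcoB x hx
          have hmem : t₁ ∈ closure (Ico (0:ℝ) t₁) := by
            rw [closure_Ico h0.ne]
            exact ⟨ht₁0, le_rfl⟩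
          have := (closure_mono hsub) hmem
          rw [hBclosed.closure_eq] at this
          have h2 := this.2
          simp only [mem_preimage, Metric.mem_closedBall, dist_zero_right] at h2
          rw [he]
          exact h2
    -- v as a continuous map
    set vC : C(Icc (0:ℝ) τ, X) := ⟨fun p => v p, continuousOn_iff_continuous_restrict.mp hv⟩
      with hvCdef
    have hextv : ∀ s' ∈ Icc (0:ℝ) τ, ext vC s' = v s' := by
      intro s' hs'
      rw [hextdef]
      simp only
      rw [IccExtend_of_mem hτle _ hs']
      rfl
    have hveqG : ∀ s' ∈ Icc (0:ℝ) τ,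
        (∫ x in (0:ℝ)..s', ((s' - x) ^ (α - 1)) • f x (v x))
          = ∫ x in (0:ℝ)..s', ((s' - x) ^ (α - 1)) • G vC x := by
      intro s' hs'
      apply intervalIntegral.integral_congr
      intro x hx
      rw [uIcc_of_le hs'.1] at hx
      have h1 : max x 0 = x := max_eq_left hx.1
      have h2 : ext vC x = v x := hextv x ⟨hx.1, hx.2.trans hs'.2⟩
      show _ = ((s' - x) ^ (α-1)) • f (max x 0) (ext vC x)
      rw [h1, h2]
    have hhalf : ∀ s' ∈ Icc (0:ℝ) t₁, ‖v s' - u₀‖ ≤ R / 2 := by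
      intro s' hs'
      have hs'I : s' ∈ Icc (0:ℝ) τ := ⟨hs'.1, hs'.2.trans ht₁τ⟩
      have hGb : ∀ x ∈ Icc (0:ℝ) s', ‖G vC x‖ ≤ M := by
        intro x hx
        have hxI : x ∈ Icc (0:ℝ) τ := ⟨hx.1, (hx.2.trans hs'.2).trans ht₁τ⟩
        apply hGbound vC x hxI
        rw [hextv x hxI]
        exact ht₁A.2 x ⟨hx.1, hx.2.trans hs'.2⟩
      have heqv := hveq s' hs'I
      rw [hveqG s' hs'I, V_eq hα0 (G vC) hs'.1] at heqv
      have hJ : ‖J α (G vC) s'‖ ≤ M / α := J_norm_le hα0 hs'.1 hGb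
      have hnorm : ‖v s' - u₀‖ = c * (s' ^ α * ‖J α (G vC) s'‖) := by
        rw [heqv, add_sub_cancel_left, norm_smul, norm_smul, Real.norm_eq_abs,
          Real.norm_eq_abs, abs_of_nonneg hc0.le, abs_of_nonneg (Real.rpow_nonneg hs'.1 _)]
      rw [hnorm]
      calc c * (s' ^ α * ‖J α (G vC) s'‖) ≤ c * (τ ^ α * (M / α)) := by
            apply mul_le_mul_of_nonneg_left _ hc0.le
            exact mul_le_mul (Real.rpow_le_rpow hs'.1 hs'I.2 hα0.le) hJ (norm_nonneg _) hτα0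
        _ ≤ R / 2 := hnum1
    have ht₁eq : t₁ = τ := by
      by_contra hne
      have hlt : t₁ < τ := lt_of_le_of_ne ht₁τ hne
      have hcw : ContinuousWithinAt v (Icc 0 τ) t₁ := hv.continuousWithinAt ⟨ht₁0, ht₁τ⟩
      obtain ⟨δ, hδ0, hδ⟩ := Metric.continuousWithinAt_iff.mp hcw (R/2) (by positivity)
      set t₂ : ℝ := min τ (t₁ + δ/2) with ht₂def
      have ht₂gt : t₁ < t₂ := lt_min hlt (by linarith)
      have ht₂A : t₂ ∈ A := by
        refine ⟨⟨ht₁0.trans ht₂gt.le, min_le_left _ _⟩, ?_⟩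
        intro x hx
        rcases le_or_gt x t₁ with h | h
        · exact ht₁A.2 x ⟨hx.1, h⟩
        · have hxI : x ∈ Icc (0:ℝ) τ := ⟨hx.1, hx.2.trans (min_le_left _ _)⟩
          have hdx : dist x t₁ < δ := by
            rw [Real.dist_eq, abs_of_pos (by linarith)]
            have hxb : x ≤ t₁ + δ/2 := hx.2.trans (min_le_right _ _)
            linarith
          have h1 := hδ hxI hdx
          have h2 := hhalf t₁ ⟨ht₁0, le_rfl⟩
          have h3 : ‖v x - u₀‖ ≤ ‖v x - v t₁‖ + ‖v t₁ - u₀‖ := norm_sub_le_norm_sub_add_norm_sub _ _ _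
          rw [dist_eq_norm] at h1
          linarith
      have := le_csSup hAbdd ht₂A
      linarith
    have hvS : vC ∈ S := by
      intro p
      have hp : (p : ℝ) ∈ Icc (0:ℝ) t₁ := ⟨p.2.1, by rw [ht₁eq]; exact p.2.2⟩
      exact (ht₁A.2 p hp).trans (by linarith)
    have hfixv : T ⟨vC, hvS⟩ = ⟨vC, hvS⟩ := by
      apply Subtype.ext
      apply ContinuousMap.ext
      intro p
      show Tfun vC p = vC p
      rw [hTval vC p]
      have h2 := hveq p p.2
      rw [hveqG p p.2] at h2
      exact h2.symm
    have hφv : (⟨vC, hvS⟩ : S) = φ := hT.fixedPoint_unique hfixv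
    have hvceq : vC = (φ : C(Icc (0:ℝ) τ, X)) := congrArg Subtype.val hφv
    have hvs : v s = vC ⟨s, hs⟩ := rfl
    rw [hvs, hvceq]
    exact (IccExtend_of_mem hτle _ hs).symm
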